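/- For every δ ∈ (0,1) and every C > 0 there exists G > 0 such that for all ε > G the following holds: for every real number a satisfying erfc(a) − e^ε · erfc(√(a² + ε)) = 2δ, one has √2 · C < a + √(a² + ε). (Since the minimal standard deviation of Gaussian noise achieving (ε,δ)-differential privacy for a query of ℓ₂-sensitivity Δ is (a + √(a² + ε))·Δ/(ε√2), this says that any Gaussian mechanism with noise amount C·Δ/ε — in particular the classical mechanisms with C = √(2 ln(2/δ)) or C = √(2 ln(1.25/δ)) — fails to achieve (ε,δ)-differential privacy for all sufficiently large ε.) -/

import Mathlib

open Real

/-- The Gauss error function `erf x = (2/√π) ∫₀ˣ e^{−t²} dt`. -/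
noncomputable def erf (x : ℝ) : ℝ := 2 / Real.sqrt Real.pi * ∫ t in (0:ℝ)..x, Real.exp (-t ^ 2)

/-- The complementary error function `erfc x = 1 - erf x`. -/
noncomputable def erfc (x : ℝ) : ℝ := 1 - erf x

lemma exp_neg_sq_integrable : MeasureTheory.Integrable (fun t : ℝ => Real.exp (-t ^ 2)) := by
  simpa using integrable_exp_neg_mul_sq (by norm_num : (0:ℝ) < 1)

lemma mul_exp_neg_sq_integrable :
    MeasureTheory.Integrable (fun t : ℝ => t * Real.exp (-t ^ 2)) := by
  simpa using integrable_mul_exp_neg_mul_sq (by norm_num : (0:ℝ) < 1)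

lemma sqrt_pi_pos : 0 < Real.sqrt Real.pi := Real.sqrt_pos.2 Real.pi_pos

lemma erf_mono : Monotone erf := by
  intro x y hxy
  have h : ∀ a b : ℝ, IntervalIntegrable (fun t => Real.exp (-t ^ 2))
      MeasureTheory.volume a b := fun a b =>
    (Continuous.intervalIntegrable (by continuity) a b)
  unfold erf
  apply mul_le_mul_of_nonneg_left _ (by positivity)
  have hadd := intervalIntegral.integral_add_adjacent_intervals (h 0 x) (h x y)
  have hnn : 0 ≤ ∫ t in x..y, Real.exp (-t ^ 2) :=
    intervalIntegral.integral_nonneg hxy (fun t _ => (Real.exp_pos _).le)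
  linarith

lemma erf_neg_eq (x : ℝ) : erf (-x) = -erf x := by
  unfold erf
  have h := intervalIntegral.integral_comp_neg (a := x) (b := 0)
    (f := fun t => Real.exp (-t ^ 2))
  simp only [neg_sq, neg_zero] at h
  rw [← h, intervalIntegral.integral_symm]
  ring

lemma erfc_neg_eq (x : ℝ) : erfc (-x) = 2 - erfc x := by
  unfold erfc; rw [erf_neg_eq]; ring

lemma erfc_anti : Antitone erfc := by
  intro x y hxy
  unfold erfc
  have := erf_mono hxy
  linarith

lemma erfc_eq_tail {x : ℝ} (hx : 0 ≤ x) :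
    erfc x = 2 / Real.sqrt Real.pi * ∫ t in Set.Ioi x, Real.exp (-t ^ 2) := by
  have hsplit : (∫ t in Set.Ioi (0:ℝ), Real.exp (-t ^ 2))
      = (∫ t in Set.Ioc 0 x, Real.exp (-t ^ 2)) + ∫ t in Set.Ioi x, Real.exp (-t ^ 2) := by
    rw [← MeasureTheory.setIntegral_union (Set.Ioc_disjoint_Ioi le_rfl) measurableSet_Ioi
      exp_neg_sq_integrable.integrableOn exp_neg_sq_integrable.integrableOn,
      Set.Ioc_union_Ioi_eq_Ioi hx]
  have hgauss : (∫ t in Set.Ioi (0:ℝ), Real.exp (-t ^ 2)) = Real.sqrt Real.pi / 2 := by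
    have h := integral_gaussian_Ioi 1
    simpa using h
  have hIoc : (∫ t in (0:ℝ)..x, Real.exp (-t ^ 2)) = ∫ t in Set.Ioc 0 x, Real.exp (-t ^ 2) :=
    intervalIntegral.integral_of_le hx
  unfold erfc erf
  rw [hIoc]
  have htail : (∫ t in Set.Ioi x, Real.exp (-t ^ 2))
      = Real.sqrt Real.pi / 2 - ∫ t in Set.Ioc 0 x, Real.exp (-t ^ 2) := by linarith
  rw [htail, mul_sub]
  have h1 : 2 / Real.sqrt Real.pi * (Real.sqrt Real.pi / 2) = 1 := by
    field_simp
  rw [h1]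

lemma tail_integral_eq (x : ℝ) :
    (∫ t in Set.Ioi x, t * Real.exp (-t ^ 2)) = Real.exp (-x ^ 2) / 2 := by
  have hd : ∀ t : ℝ, HasDerivAt (fun t : ℝ => -Real.exp (-t ^ 2) / 2)
      (t * Real.exp (-t ^ 2)) t := by
    intro t
    have h1 : HasDerivAt (fun t : ℝ => -t ^ 2) (-(2 * t)) t := by
      simpa using (hasDerivAt_pow 2 t).fun_neg
    have h3 := (h1.exp.fun_neg).div_const 2
    refine h3.congr_deriv ?_
    ring
  have htop : Filter.Tendsto (fun t : ℝ => -Real.exp (-t ^ 2) / 2) Filter.atTop (nhds 0) := by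
    have hsq : Filter.Tendsto (fun t : ℝ => -t ^ 2) Filter.atTop Filter.atBot := by
      have h2 : Filter.Tendsto (fun t : ℝ => t ^ 2) Filter.atTop Filter.atTop :=
        Filter.tendsto_pow_atTop (by norm_num)
      exact Filter.tendsto_neg_atTop_atBot.comp h2
    have hexp : Filter.Tendsto (fun t : ℝ => Real.exp (-t ^ 2)) Filter.atTop (nhds 0) :=
      Real.tendsto_exp_atBot.comp hsq
    have := (hexp.neg).div_const 2
    simpa using this
  have := MeasureTheory.integral_Ioi_of_hasDerivAt_of_tendsto
    (f := fun t : ℝ => -Real.exp (-t ^ 2) / 2) (f' := fun t => t * Real.exp (-t ^ 2))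
    (a := x) ((hd x).continuousAt.continuousWithinAt) (fun t _ => hd t)
    mul_exp_neg_sq_integrable.integrableOn htop
  rw [this]
  ring

lemma erfc_le_exp {x : ℝ} (hx : 1 ≤ x) : erfc x ≤ Real.exp (-x ^ 2) := by
  have h0 : (0:ℝ) ≤ x := le_trans zero_le_one hx
  rw [erfc_eq_tail h0]
  have hmono : (∫ t in Set.Ioi x, Real.exp (-t ^ 2))
      ≤ ∫ t in Set.Ioi x, t * Real.exp (-t ^ 2) := by
    apply MeasureTheory.setIntegral_mono_on exp_neg_sq_integrable.integrableOn
      mul_exp_neg_sq_integrable.integrableOn measurableSet_Ioi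
    intro t ht
    have h1t : 1 ≤ t := le_trans hx (le_of_lt ht)
    nlinarith [Real.exp_pos (-t ^ 2)]
  have hval := tail_integral_eq x
  have hπ : (1:ℝ) ≤ Real.sqrt Real.pi := by
    rw [show (1:ℝ) = Real.sqrt 1 by simp]
    exact Real.sqrt_le_sqrt (by nlinarith [Real.pi_gt_three])
  have hexp : 0 < Real.exp (-x ^ 2) := Real.exp_pos _
  calc 2 / Real.sqrt Real.pi * ∫ t in Set.Ioi x, Real.exp (-t ^ 2)
      ≤ 2 / Real.sqrt Real.pi * (Real.exp (-x ^ 2) / 2) := by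
        apply mul_le_mul_of_nonneg_left _ (by positivity)
        rw [← hval]; exact hmono
    _ = Real.exp (-x ^ 2) / Real.sqrt Real.pi := by field_simp
    _ ≤ Real.exp (-x ^ 2) := by
        rw [div_le_iff₀ (by positivity)]
        nlinarith

/-- For every `δ ∈ (0,1)` and every `C > 0` there exists `G > 0` such that for all `ε > G`:
for every real `a` with `erfc a − e^ε · erfc (√(a² + ε)) = 2δ`, one has
`√2 · C < a + √(a² + ε)`. -/
theorem classical_gaussian_mechanisms_fail_for_large_eps
    (δ : ℝ) (hδ : 0 < δ ∧ δ < 1) (C : ℝ) (hC : 0 < C) :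
    ∃ G : ℝ, 0 < G ∧ ∀ ε : ℝ, G < ε →
      ∀ a : ℝ, erfc a - Real.exp ε * erfc (Real.sqrt (a ^ 2 + ε)) = 2 * δ →
        Real.sqrt 2 * C < a + Real.sqrt (a ^ 2 + ε) := by
  obtain ⟨hδ0, hδ1⟩ := hδ
  set K : ℝ := 1 + Real.sqrt (-Real.log (1 - δ)) with hKdef
  have hsn : 0 ≤ Real.sqrt (-Real.log (1 - δ)) := Real.sqrt_nonneg _
  have hK1 : 1 ≤ K := by linarith
  have hlogneg : Real.log (1 - δ) < 0 := Real.log_neg (by linarith) (by linarith)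
  have hKe : Real.exp (-K ^ 2) < 1 - δ := by
    have hlog : Real.sqrt (-Real.log (1 - δ)) ^ 2 = -Real.log (1 - δ) :=
      Real.sq_sqrt (by linarith)
    have h2 : -K ^ 2 < Real.log (1 - δ) := by nlinarith
    calc Real.exp (-K ^ 2) < Real.exp (Real.log (1 - δ)) := Real.exp_lt_exp.2 h2
      _ = 1 - δ := Real.exp_log (by linarith)
  refine ⟨1 + (Real.sqrt 2 * C + K) ^ 2, by positivity, ?_⟩
  intro ε hε a heq
  have hsC : 0 ≤ Real.sqrt 2 * C := by positivity
  have hε1 : 1 < ε := by nlinarith [sq_nonneg (Real.sqrt 2 * C + K)]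
  have hε0 : 0 < ε := by linarith
  have hs2 : Real.sqrt (a ^ 2 + ε) ^ 2 = a ^ 2 + ε := Real.sq_sqrt (by positivity)
  have h1 : 1 ≤ Real.sqrt (a ^ 2 + ε) := by
    rw [show (1:ℝ) = Real.sqrt 1 by simp]
    exact Real.sqrt_le_sqrt (by nlinarith [sq_nonneg a])
  have hb1 : erfc (Real.sqrt (a ^ 2 + ε)) ≤ Real.exp (-(a ^ 2 + ε)) := by
    have h := erfc_le_exp h1
    rwa [hs2] at h
  have haK : -K < a := by
    by_contra hcon
    push_neg at hcon
    have h2 : erfc K ≤ Real.exp (-K ^ 2) := erfc_le_exp hK1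
    have h3 : 2 - erfc K ≤ erfc a := by
      have h := erfc_anti hcon
      rw [erfc_neg_eq] at h
      linarith
    have h4 : Real.exp ε * erfc (Real.sqrt (a ^ 2 + ε)) ≤ Real.exp (-a ^ 2) := by
      calc Real.exp ε * erfc (Real.sqrt (a ^ 2 + ε))
          ≤ Real.exp ε * Real.exp (-(a ^ 2 + ε)) :=
            mul_le_mul_of_nonneg_left hb1 (Real.exp_pos ε).le
        _ = Real.exp (-a ^ 2) := by rw [← Real.exp_add]; ring_nf
    have h5 : Real.exp (-a ^ 2) ≤ Real.exp (-K ^ 2) := by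
      apply Real.exp_le_exp.2
      nlinarith
    linarith
  have hsl : Real.sqrt 2 * C + K < Real.sqrt (a ^ 2 + ε) := by
    have h6 : (Real.sqrt 2 * C + K) ^ 2 < a ^ 2 + ε := by nlinarith [sq_nonneg a]
    calc Real.sqrt 2 * C + K = Real.sqrt ((Real.sqrt 2 * C + K) ^ 2) := by
          rw [Real.sqrt_sq (by positivity)]
      _ < Real.sqrt (a ^ 2 + ε) := Real.sqrt_lt_sqrt (by positivity) h6
  linarith
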